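/- Let F be a field, A a commutative integral domain over F. Then the superalgebra Γ(A) = A ⊕ A² with products a·b=ab, a·(b,c)=(ab,ac), (a,b)·(c,d)=ad−bc is prime: if I, J are nonzero ideals of Γ(A) then IJ ≠ 0. -/
import Mathlib


/-- The multiplication of Γ(A) = A ⊕ A², on elements written as (even part, odd pair):
a·b = ab, a·(b,c) = (ab,ac), (a,b)·(c,d) = ad − bc. -/
def gammaMul {A : Type*} [CommRing A] (x y : A × A × A) : A × A × A :=
  (x.1 * y.1 + (x.2.1 * y.2.2 - x.2.2 * y.2.1),
   (x.1 * y.2.1 + y.1 * x.2.1, x.1 * y.2.2 + y.1 * x.2.2))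

/-- An ideal of the superalgebra Γ(A): an additive subgroup closed under
multiplication by arbitrary elements of Γ(A) on both sides. -/
def GammaIdeal {A : Type*} [CommRing A] (I : Set (A × A × A)) : Prop :=
  (0 : A × A × A) ∈ I ∧ (∀ x ∈ I, ∀ y ∈ I, x + y ∈ I) ∧ (∀ x ∈ I, -x ∈ I) ∧
    ∀ x ∈ I, ∀ y : A × A × A, gammaMul x y ∈ I ∧ gammaMul y x ∈ I

/-- A nonzero ideal of Γ(A) contains an element with nonzero even part. -/
lemma gammaIdeal_exists_fst_ne {A : Type*} [CommRing A] [IsDomain A]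
    (I : Set (A × A × A)) (hI : GammaIdeal I) (hI0 : I ≠ {0}) :
    ∃ x ∈ I, x.1 ≠ 0 := by
  obtain ⟨z, hzI, hz0⟩ : ∃ z ∈ I, z ≠ 0 := by
    by_contra h
    push_neg at h
    apply hI0
    apply Set.eq_singleton_iff_unique_mem.mpr
    exact ⟨hI.1, fun z hz => h z hz⟩
  by_cases ha : z.1 ≠ 0
  · exact ⟨z, hzI, ha⟩
  push_neg at ha
  by_cases hb : z.2.1 ≠ 0
  · refine ⟨gammaMul z (0, 0, z.2.1), (hI.2.2.2 z hzI (0, 0, z.2.1)).1, ?_⟩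
    simp only [gammaMul, ha]
    simpa using mul_ne_zero hb hb
  · push_neg at hb
    have hc : z.2.2 ≠ 0 := by
      intro hc
      exact hz0 (Prod.ext ha (Prod.ext hb hc))
    refine ⟨gammaMul z (0, -z.2.2, 0), (hI.2.2.2 z hzI (0, -z.2.2, 0)).1, ?_⟩
    simp only [gammaMul, ha]
    simpa using mul_ne_zero hc hc

/-- For a commutative integral domain A over a field F, the
superalgebra Γ(A) = A ⊕ A² is prime: if I, J are nonzero ideals then IJ ≠ 0. -/
theorem gammaA_prime (F A : Type*) [Field F] [CommRing A] [IsDomain A] [Algebra F A]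
    (I J : Set (A × A × A)) (hI : GammaIdeal I) (hJ : GammaIdeal J)
    (hI0 : I ≠ {0}) (hJ0 : J ≠ {0}) :
    ∃ x ∈ I, ∃ y ∈ J, gammaMul x y ≠ 0 := by
  obtain ⟨x, hxI, ha⟩ := gammaIdeal_exists_fst_ne I hI hI0
  obtain ⟨y, hyJ, hd⟩ := gammaIdeal_exists_fst_ne J hJ hJ0
  by_cases h1 : (gammaMul x y).1 ≠ 0
  · exact ⟨x, hxI, y, hyJ, fun h => h1 (by rw [h]; rfl)⟩
  · push_neg at h1
    refine ⟨gammaMul x x, (hI.2.2.2 x hxI x).1, y, hyJ, fun h => ?_⟩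
    have h2 : (gammaMul (gammaMul x x) y).1 = 0 := by rw [h]; rfl
    simp only [gammaMul] at h1 h2
    have key : x.1 * x.1 * y.1 = 0 := by linear_combination 2 * x.1 * h1 - h2
    exact hd (by
      have := mul_ne_zero (mul_ne_zero ha ha) hd
      exact absurd key this)
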